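/- Let $\hat\mu_1, \hat\mu_2, \dots$ be exchangeable real-valued estimators of $\mu$ such that $\mathbb{P}(|\hat\mu_k - \mu| \ge \epsilon) \le \beta$ for each $k$, where $\epsilon > 0$ and $\beta \in [0,1]$. For each $K$, let $m_K$ denote the median of $\hat\mu_1,\dots,\hat\mu_K$. Then $\mathbb{P}(\exists K \ge 1 : |m_K - \mu| \ge \epsilon) \le 2\beta$. -/

import Mathlib

open MeasureTheory

/-- The `⌈K/2⌉`-th smallest value (1-indexed) among `c 0, …, c (K-1)`. -/
noncomputable def medianOf {K : ℕ} (c : Fin K → ℝ) : ℝ :=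
  (Multiset.sort (Multiset.ofList (List.ofFn c)) (· ≤ ·)).getD ((K + 1) / 2 - 1) 0

namespace RMTU

open Finset Classical
open scoped ENNReal

section Cycle

variable (N : ℕ) (x : ℕ → ℕ)



/-- Prefix sums of the ±1 walk associated with periodic extension of `x`. -/
def T (j : ℕ) : ℤ := (j : ℤ) - 2 * ∑ i ∈ Finset.range j, (x (i % N) : ℤ)

lemma T_succ (j : ℕ) : T N x (j + 1) = T N x j + (1 - 2 * (x (j % N) : ℤ)) := by
  simp [T, Finset.sum_range_succ]; ring

lemma T_succ_le (j : ℕ) : T N x (j + 1) ≤ T N x j + 1 := by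
  rw [T_succ]; have : (0:ℤ) ≤ (x (j % N) : ℤ) := Int.natCast_nonneg _
  linarith

lemma T_succ_ge (hx : ∀ k, x k ≤ 1) (j : ℕ) : T N x j - 1 ≤ T N x (j + 1) := by
  rw [T_succ]
  have : (x (j % N) : ℤ) ≤ 1 := by exact_mod_cast hx (j % N)
  linarith

lemma window_sum (hN : 0 < N) (j : ℕ) :
    ∑ i ∈ Finset.range (j + N), (x (i % N) : ℤ)
      = (∑ i ∈ Finset.range j, (x (i % N) : ℤ)) + ∑ i ∈ Finset.range N, (x i : ℤ) := by
  induction j with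
  | zero =>
      simp only [Nat.zero_add, Finset.range_zero, Finset.sum_empty, zero_add]
      exact Finset.sum_congr rfl fun i hi => by
        rw [Nat.mod_eq_of_lt (Finset.mem_range.mp hi)]
  | succ n ih =>
      have h1 : n + 1 + N = (n + N) + 1 := by ring
      rw [h1, Finset.sum_range_succ, ih, Finset.sum_range_succ]
      have : (n + N) % N = n % N := by simp [Nat.add_mod_right]
      rw [this]; ring

lemma T_add_N (hN : 0 < N) (j : ℕ) :
    T N x (j + N) = T N x j + ((N : ℤ) - 2 * ∑ i ∈ Finset.range N, (x i : ℤ)) := by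
  simp [T, window_sum N x hN j]; push_cast; ring

/-- Upward intermediate value theorem for the walk. -/
lemma ivt (a : ℕ) (v : ℤ) : ∀ n : ℕ, T N x a ≤ v → v ≤ T N x (a + n) →
    ∃ k ≤ n, T N x (a + k) = v := by
  intro n
  induction n with
  | zero => intro h1 h2; exact ⟨0, le_refl 0, le_antisymm (by simpa using h1) (by simpa using h2)⟩
  | succ n ih =>
      intro h1 h2
      by_cases hc : v ≤ T N x (a + n)
      · obtain ⟨k, hk, hkv⟩ := ih h1 hc
        exact ⟨k, hk.trans (Nat.le_succ n), hkv⟩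
      · push_neg at hc
        have hle := T_succ_le N x (a + n)
        have : T N x (a + (n+1)) = v := by
          have : a + (n+1) = (a + n) + 1 := by ring
          rw [this] at h2 ⊢; omega
        exact ⟨n+1, le_refl _, this⟩


lemma T_diff (r : ℕ) : ∀ n : ℕ, T N x (r + n)
    = T N x r + ((n : ℤ) - 2 * ∑ k ∈ Finset.range n, (x ((r + k) % N) : ℤ)) := by
  intro n
  induction n with
  | zero => simp
  | succ n ih =>
      have h1 : r + (n + 1) = (r + n) + 1 := by ring
      rw [h1, T_succ, ih, Finset.sum_range_succ]
      have h2 : (r + n) % N = (r + n) % N := rfl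
      push_cast
      ring

/-- Cycle-lemma counting bound: the number of rotations `r < N` for which some prefix
has at least half ones is at most `2 * (number of ones)`. -/
lemma cycle_card_le (hN : 0 < N) (hx : ∀ k, x k ≤ 1) :
    ((Finset.range N).filter
        (fun r => ∃ n, 1 ≤ n ∧ n ≤ N ∧ n ≤ 2 * ∑ k ∈ Finset.range n, x ((r + k) % N))).card
      ≤ 2 * ∑ k ∈ Finset.range N, x k := by
  classical
  set p := ∑ k ∈ Finset.range N, x k with hp
  by_cases hcase : N ≤ 2 * p
  · exact le_trans (le_trans (Finset.card_filter_le _ _) (Finset.card_range N).le) hcase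
  push_neg at hcase
  set d : ℕ := N - 2 * p with hd
  have hdpos : 0 < d := by omega
  have hdN : d + 2 * p = N := by omega
  have hsum_cast : ∑ i ∈ Finset.range N, (x i : ℤ) = (p : ℤ) := by
    rw [hp]; push_cast; rfl
  have hTN : ∀ j, T N x (j + N) = T N x j + (d : ℤ) := by
    intro j
    rw [T_add_N N x hN, hsum_cast]
    have : (d : ℤ) = (N : ℤ) - 2 * (p : ℤ) := by
      have := hdN; push_cast [← this]; ring
    rw [this]
  obtain ⟨j0, hj0N, hj0min⟩ :=
    Finset.exists_min_image (Finset.range N) (T N x) ⟨0, Finset.mem_range.mpr hN⟩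
  have hj0N' : j0 < N := Finset.mem_range.mp hj0N
  set m : ℤ := T N x j0 with hm
  have hmin : ∀ j < N, m ≤ T N x j := fun j hj => hj0min j (Finset.mem_range.mpr hj)
  -- for each v < d there is a witness j < N with T j = m + v
  have hwit : ∀ v : ℕ, v < d → ∃ j < N, T N x j = m + v := by
    intro v hv
    have h1 : T N x j0 ≤ m + v := by
      have : (0:ℤ) ≤ (v:ℤ) := Int.natCast_nonneg _
      linarith
    have h2 : m + v ≤ T N x (j0 + N) := by
      rw [hTN j0]
      have : (v:ℤ) ≤ (d:ℤ) := by exact_mod_cast hv.le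
      linarith
    obtain ⟨k, hkN, hTk⟩ := ivt N x j0 (m + v) N h1 h2
    by_cases hj : j0 + k < N
    · exact ⟨j0 + k, hj, hTk⟩
    · exfalso
      push_neg at hj
      have hlt : j0 + k - N < N := by omega
      have heq : (j0 + k - N) + N = j0 + k := by omega
      have := hTN (j0 + k - N)
      rw [heq, hTk] at this
      have hge := hmin _ hlt
      have hvd : (v:ℤ) < (d:ℤ) := by exact_mod_cast hv
      linarith
  -- the last position where value m+v is attained is a good rotation
  set P : ℕ → ℕ → Prop := fun v j => T N x j = m + v with hP
  have hPdec : ∀ v, DecidablePred (P v) := fun v j => by unfold P; infer_instance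
  set rr : ℕ → ℕ := fun v => Nat.findGreatest (P v) (N - 1) with hrr
  have hrrN : ∀ v, rr v < N := fun v =>
    lt_of_le_of_lt (Nat.findGreatest_le (N - 1)) (by omega)
  have hrrT : ∀ v < d, T N x (rr v) = m + v := by
    intro v hv
    obtain ⟨j, hjN, hjT⟩ := hwit v hv
    exact Nat.findGreatest_spec (P := P v) (n := N - 1) (m := j) (by omega) hjT
  have hrrmax : ∀ v < d, ∀ j, rr v < j → j < N → T N x j ≠ m + v := by
    intro v hv j hj hjN
    exact Nat.findGreatest_is_greatest hj (by omega)
  set good : ℕ → Prop := fun r => ∀ n, 1 ≤ n → n ≤ N → T N x r < T N x (r + n) with hgood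
  have hrrgood : ∀ v < d, good (rr v) := by
    intro v hv n hn1 hnN
    by_contra hcon
    push_neg at hcon
    have hTrv := hrrT v hv
    -- climb back up to m+v between rr v + n and rr v + N
    have h2 : m + v ≤ T N x ((rr v + n) + (N - n)) := by
      have : (rr v + n) + (N - n) = rr v + N := by omega
      rw [this, hTN, hTrv]
      have : (0:ℤ) ≤ (d:ℤ) := Int.natCast_nonneg _
      linarith
    have h1 : T N x (rr v + n) ≤ m + v := by rw [← hTrv]; exact hcon
    obtain ⟨k, hk, hTk⟩ := ivt N x (rr v + n) (m + v) (N - n) h1 h2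
    set j' := rr v + n + k with hj'
    have hj'big : rr v < j' := by omega
    have hj'le : j' ≤ rr v + N := by omega
    by_cases hj'N : j' < N
    · exact hrrmax v hv j' hj'big hj'N hTk
    · push_neg at hj'N
      have hlt : j' - N < N := lt_of_le_of_lt (by omega : j' - N ≤ rr v) (hrrN v)
      have heq : (j' - N) + N = j' := by omega
      have hTj := hTN (j' - N)
      rw [heq, hTk] at hTj
      have hge := hmin _ hlt
      have hvd : (v:ℤ) < (d:ℤ) := by exact_mod_cast hv
      linarith
  -- so there are at least d good rotations
  have hinj : Set.InjOn rr (Finset.range d) := by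
    intro a ha b hb hab
    have hTa := hrrT a (Finset.mem_range.mp ha)
    have hTb := hrrT b (Finset.mem_range.mp hb)
    rw [hab, hTb] at hTa
    have : (a:ℤ) = (b:ℤ) := by linarith
    exact_mod_cast this
  have hmaps : ∀ v ∈ Finset.range d, rr v ∈ (Finset.range N).filter good := by
    intro v hv
    exact Finset.mem_filter.mpr ⟨Finset.mem_range.mpr (hrrN v),
      hrrgood v (Finset.mem_range.mp hv)⟩
  have hcard_good : d ≤ ((Finset.range N).filter good).card := by
    simpa using Finset.card_le_card_of_injOn rr hmaps hinj
  -- bad is the complement of good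
  have hiff : ∀ r : ℕ,
      (∃ n, 1 ≤ n ∧ n ≤ N ∧ n ≤ 2 * ∑ k ∈ Finset.range n, x ((r + k) % N)) ↔ ¬ good r := by
    intro r
    have key : ∀ n : ℕ, (n ≤ 2 * ∑ k ∈ Finset.range n, x ((r + k) % N))
        ↔ ¬ (T N x r < T N x (r + n)) := by
      intro n
      rw [T_diff, not_lt]
      constructor
      · intro h
        have h' : (n:ℤ) ≤ 2 * ∑ k ∈ Finset.range n, (x ((r + k) % N) : ℤ) := by
          exact_mod_cast h
        linarith
      · intro h
        have h' : (n:ℤ) ≤ 2 * ∑ k ∈ Finset.range n, (x ((r + k) % N) : ℤ) := by linarith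
        exact_mod_cast h'
    unfold good
    push_neg
    constructor
    · rintro ⟨n, h1, h2, h3⟩
      exact ⟨n, h1, h2, not_lt.mp ((key n).mp h3)⟩
    · rintro ⟨n, h1, h2, h3⟩
      exact ⟨n, h1, h2, (key n).mpr (not_lt.mpr h3)⟩
  have hfeq : (Finset.range N).filter
        (fun r => ∃ n, 1 ≤ n ∧ n ≤ N ∧ n ≤ 2 * ∑ k ∈ Finset.range n, x ((r + k) % N))
      = (Finset.range N).filter (fun r => ¬ good r) :=
    Finset.filter_congr (fun r _ => hiff r)
  rw [hfeq]
  have hsplit := Finset.card_filter_add_card_filter_not (s := Finset.range N) good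
  rw [Finset.card_range] at hsplit
  omega


end Cycle


lemma countP_eq_sum {α : Type*} (p : α → Bool) (l : List α) :
    l.countP p = (l.map (fun a => if p a then 1 else 0)).sum := by
  induction l with
  | nil => simp
  | cons a l ih =>
      rw [List.countP_cons, List.map_cons, List.sum_cons, ih]
      by_cases h : p a <;> simp [h] <;> omega

lemma countP_ofFn {K : ℕ} (c : Fin K → ℝ) (p : ℝ → Bool) :
    (List.ofFn c).countP p = ∑ i : Fin K, (if p (c i) then 1 else 0) := by
  rw [countP_eq_sum, List.map_ofFn, List.sum_ofFn]
  rfl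

lemma median_count (K : ℕ) (hK : 1 ≤ K) (f : ℕ → ℝ) (μ₀ ε : ℝ)
    (h : ε ≤ |medianOf (fun i : Fin K => f i) - μ₀|) :
    K ≤ 2 * ∑ k ∈ Finset.range K, (if ε ≤ |f k - μ₀| then 1 else 0) := by
  classical
  set c : Fin K → ℝ := fun i => f i with hc
  set L := Multiset.sort (Multiset.ofList (List.ofFn c)) (· ≤ ·) with hL
  have hlen : L.length = K := by
    rw [hL, Multiset.length_sort]
    simp
  set i0 : ℕ := (K + 1) / 2 - 1 with hi0
  have hi0K : i0 < K := by omega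
  have hi0L : i0 < L.length := by omega
  have hmed : medianOf c = L.get ⟨i0, hi0L⟩ := List.getD_eq_getElem L 0 hi0L
  have hsort : L.Pairwise (· ≤ ·) := Multiset.pairwise_sort _ _
  have hperm : L.Perm (List.ofFn c) := Multiset.coe_eq_coe.mp (Multiset.sort_eq _ _)
  -- generic step: a monotone-position count bound
  have main : ∀ p : ℝ → Bool, (∀ y, p y = true → ε ≤ |y - μ₀|) →
      L.countP p ≤ ∑ k ∈ Finset.range K, (if ε ≤ |f k - μ₀| then 1 else 0) := by
    intro p hp
    rw [hperm.countP_eq, countP_ofFn]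
    rw [← Fin.sum_univ_eq_sum_range (fun k => if ε ≤ |f k - μ₀| then 1 else 0) K]
    apply Finset.sum_le_sum
    intro i _
    by_cases hpc : p (c i) = true
    · have h1 := hp _ hpc; simp only [hc] at h1; simp [hpc, h1]
    · simp [hpc]
  rcases le_abs.mp h with hcase | hcase
  · -- median ≥ μ₀ + ε : positions i0 .. K-1 are large
    have hall : ∀ a ∈ L.drop i0, (decide (μ₀ + ε ≤ a)) = true := by
      intro a ha
      obtain ⟨j, hj⟩ := List.get_of_mem ha
      have hjlen : (j : ℕ) < L.length - i0 := by
        have := j.isLt; simpa [List.length_drop] using this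
      have hget : (L.drop i0).get j = L.get ⟨i0 + j, by omega⟩ := by
        simp [List.getElem_drop]
      rw [← hj, hget]
      have hmono : L.get ⟨i0, hi0L⟩ ≤ L.get ⟨i0 + j, by omega⟩ :=
        hsort.rel_get_of_le (by simp)
      rw [decide_eq_true_eq]
      rw [hmed] at hcase
      linarith
    have hcount : K - i0 ≤ L.countP (fun a => decide (μ₀ + ε ≤ a)) := by
      have hdrop : (L.drop i0).countP (fun a => decide (μ₀ + ε ≤ a)) = K - i0 := by
        rw [List.countP_eq_length.mpr hall, List.length_drop, hlen]
      calc K - i0 = (L.drop i0).countP (fun a => decide (μ₀ + ε ≤ a)) := hdrop.symm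
        _ ≤ (L.take i0).countP _ + (L.drop i0).countP _ := Nat.le_add_left _ _
        _ = L.countP (fun a => decide (μ₀ + ε ≤ a)) := by
            rw [← List.countP_append, List.take_append_drop]
    have hfin := le_trans hcount (main _ (fun y hy => by
      rw [decide_eq_true_eq] at hy
      have : ε ≤ y - μ₀ := by linarith
      exact le_trans this (le_abs_self _)))
    omega
  · -- median ≤ μ₀ - ε : positions 0 .. i0 are small
    have hall : ∀ a ∈ L.take (i0 + 1), (decide (a ≤ μ₀ - ε)) = true := by
      intro a ha
      obtain ⟨j, hj⟩ := List.get_of_mem ha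
      have hjlen : (j : ℕ) < i0 + 1 := by
        have := j.isLt
        have hmin : (L.take (i0+1)).length = min (i0+1) L.length := List.length_take
        omega
      have hget : (L.take (i0 + 1)).get j = L.get ⟨j, by omega⟩ := by
        simp [List.getElem_take]
      rw [← hj, hget]
      have hmono : L.get ⟨j, by omega⟩ ≤ L.get ⟨i0, hi0L⟩ :=
        hsort.rel_get_of_le (by simp; omega)
      rw [decide_eq_true_eq]
      rw [hmed] at hcase
      linarith
    have hcount : i0 + 1 ≤ L.countP (fun a => decide (a ≤ μ₀ - ε)) := by
      have htake : (L.take (i0 + 1)).countP (fun a => decide (a ≤ μ₀ - ε)) = i0 + 1 := by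
        rw [List.countP_eq_length.mpr hall, List.length_take]
        omega
      calc i0 + 1 = (L.take (i0+1)).countP (fun a => decide (a ≤ μ₀ - ε)) := htake.symm
        _ ≤ (L.take (i0+1)).countP _ + (L.drop (i0+1)).countP _ := Nat.le_add_right _ _
        _ = L.countP (fun a => decide (a ≤ μ₀ - ε)) := by
            rw [← List.countP_append, List.take_append_drop]
    have hfin := le_trans hcount (main _ (fun y hy => by
      rw [decide_eq_true_eq] at hy
      have : ε ≤ -(y - μ₀) := by linarith
      exact le_trans this (neg_le_abs _)))
    omega



open Fin.NatCast in
/-- Rotation by `r` on `{0, …, N-1}` extended by the identity to `ℕ`. -/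
def rot (N : ℕ) [NeZero N] (r : ℕ) : Equiv.Perm ℕ :=
  (Equiv.addRight ((r : Fin N))).extendDomain Fin.equivSubtype

open Fin.NatCast in
lemma rot_apply_lt (N : ℕ) [NeZero N] (r : ℕ) (hr : r < N) {k : ℕ} (hk : k < N) :
    rot N r k = (k + r) % N := by
  rw [rot, Equiv.Perm.extendDomain_apply_subtype _ Fin.equivSubtype hk]
  simp [Fin.equivSubtype, Equiv.addRight, Fin.add_def, Fin.val_natCast,
    Nat.mod_eq_of_lt hr]

lemma rot_apply_ge (N : ℕ) [NeZero N] (r : ℕ) {k : ℕ} (hk : N ≤ k) :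
    rot N r k = k :=
  Equiv.Perm.extendDomain_apply_not_subtype _ _ (by omega)


section Main

variable {Ω : Type*} [MeasurableSpace Ω] (μ : Measure Ω) [IsProbabilityMeasure μ]
    (μ₀ ε β : ℝ) (muhat : ℕ → Ω → ℝ)

theorem main_bound
    (hε : 0 < ε) (hβ0 : 0 ≤ β) (hβ1 : β ≤ 1)
    (hmeas : ∀ k, Measurable (muhat k))
    (hexch : ∀ e : Equiv.Perm ℕ, (∃ n, ∀ m ≥ n, e m = m) →
      Measure.map (fun ω (k : ℕ) => muhat (e k) ω) μ =
        Measure.map (fun ω (k : ℕ) => muhat k ω) μ)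
    (hconc : ∀ k, μ {ω | ε ≤ |muhat k ω - μ₀|} ≤ ENNReal.ofReal β)
    (N : ℕ) (hN : 0 < N) :
    μ {ω | ∃ n, 1 ≤ n ∧ n ≤ N ∧
        n ≤ 2 * ∑ k ∈ Finset.range n, (if ε ≤ |muhat k ω - μ₀| then 1 else 0)} ≤
      ENNReal.ofReal (2 * β) := by
  classical
  haveI : NeZero N := ⟨by omega⟩
  set x : Ω → ℕ → ℕ := fun ω k => if ε ≤ |muhat k ω - μ₀| then 1 else 0 with hx
  -- the basic measurable set in sequence space
  set B : Set (ℕ → ℝ) := {g | ∃ n, 1 ≤ n ∧ n ≤ N ∧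
      n ≤ 2 * ∑ k ∈ Finset.range n, (if ε ≤ |g k - μ₀| then 1 else 0)} with hB
  have hBmeas : MeasurableSet B := by
    have : B = ⋃ n ∈ Finset.Icc 1 N, {g : ℕ → ℝ |
        n ≤ 2 * ∑ k ∈ Finset.range n, (if ε ≤ |g k - μ₀| then 1 else 0)} := by
      ext g
      simp only [hB, Set.mem_setOf_eq, Set.mem_iUnion, Finset.mem_Icc]
      constructor
      · rintro ⟨n, h1, h2, h3⟩; exact ⟨n, ⟨h1, h2⟩, h3⟩
      · rintro ⟨n, ⟨h1, h2⟩, h3⟩; exact ⟨n, h1, h2, h3⟩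
    rw [this]
    apply MeasurableSet.biUnion (Finset.Icc 1 N).countable_toSet
    intro n _
    have hF : Measurable (fun g : ℕ → ℝ =>
        ∑ k ∈ Finset.range n, (if ε ≤ |g k - μ₀| then 1 else 0 : ℕ)) := by
      apply Finset.measurable_sum
      intro k _
      have hs : MeasurableSet {g : ℕ → ℝ | ε ≤ |g k - μ₀|} :=
        (((measurable_pi_apply k).sub measurable_const).abs) measurableSet_Ici
      exact Measurable.ite hs measurable_const measurable_const
    exact hF (show MeasurableSet {m : ℕ | n ≤ 2 * m} from trivial)
  -- measurable maps into sequence space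
  have hmap : ∀ e : ℕ → ℕ, Measurable (fun ω (k : ℕ) => muhat (e k) ω) :=
    fun e => measurable_pi_lambda _ (fun k => hmeas (e k))
  -- rotated events
  set A : ℕ → Set Ω := fun r => (fun ω (k : ℕ) => muhat (rot N r k) ω) ⁻¹' B with hA
  have hAmeas : ∀ r, MeasurableSet (A r) := fun r => (hmap _) hBmeas
  have hAr : ∀ r < N, ∀ ω, (ω ∈ A r ↔ ∃ n, 1 ≤ n ∧ n ≤ N ∧
      n ≤ 2 * ∑ k ∈ Finset.range n, x ω ((r + k) % N)) := by
    intro r hr ω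
    have hterm : ∀ n, n ≤ N →
        (∑ k ∈ Finset.range n, if ε ≤ |muhat ((rot N r) k) ω - μ₀| then 1 else 0)
          = ∑ k ∈ Finset.range n, x ω ((r + k) % N) := by
      intro n hn
      refine Finset.sum_congr rfl (fun k hk => ?_)
      have hkN : k < N := lt_of_lt_of_le (Finset.mem_range.mp hk) hn
      rw [rot_apply_lt N r hr hkN, Nat.add_comm k r, hx]
    simp only [hA, Set.mem_preimage, hB, Set.mem_setOf_eq]
    exact exists_congr fun n => and_congr_right fun h1 =>
      and_congr_right fun h2 => by rw [hterm n h2]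
  -- the target event is the r = 0 event
  have hA0 : {ω | ∃ n, 1 ≤ n ∧ n ≤ N ∧
      n ≤ 2 * ∑ k ∈ Finset.range n, (if ε ≤ |muhat k ω - μ₀| then 1 else 0)} = A 0 := by
    ext ω
    rw [Set.mem_setOf_eq, hAr 0 hN ω]
    have hterm : ∀ n, n ≤ N →
        (∑ k ∈ Finset.range n, if ε ≤ |muhat k ω - μ₀| then 1 else 0)
          = ∑ k ∈ Finset.range n, x ω ((0 + k) % N) := by
      intro n hn
      refine Finset.sum_congr rfl (fun k hk => ?_)
      have hkN : k < N := lt_of_lt_of_le (Finset.mem_range.mp hk) hn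
      rw [Nat.zero_add, Nat.mod_eq_of_lt hkN, hx]
    exact exists_congr fun n => and_congr_right fun h1 =>
      and_congr_right fun h2 => by rw [hterm n h2]
  -- all rotated events have the same measure
  have hApres : ∀ r, μ (A r) = μ (A 0) := by
    intro r
    have hfix : ∃ n, ∀ m ≥ n, (rot N r) m = m := ⟨N, fun m hm => rot_apply_ge N r hm⟩
    have h1 : μ (A r) = Measure.map (fun ω (k : ℕ) => muhat (rot N r k) ω) μ B := by
      rw [Measure.map_apply (hmap _) hBmeas]
    have h0 : μ (A 0) = Measure.map (fun ω (k : ℕ) => muhat (rot N 0 k) ω) μ B := by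
      rw [Measure.map_apply (hmap _) hBmeas]
    rw [h1, h0, hexch _ hfix, hexch _ ⟨N, fun m hm => rot_apply_ge N 0 hm⟩]
  -- summing over rotations
  have hsum : (N : ℝ≥0∞) * μ (A 0) = ∑ r ∈ Finset.range N, μ (A r) := by
    rw [Finset.sum_congr rfl (fun r _ => hApres r), Finset.sum_const, Finset.card_range,
      nsmul_eq_mul]
  have hint : ∑ r ∈ Finset.range N, μ (A r)
      = ∫⁻ ω, ∑ r ∈ Finset.range N, (A r).indicator (fun _ => (1:ℝ≥0∞)) ω ∂μ := by
    rw [lintegral_finset_sum _ (fun r _ =>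
      (measurable_const (a := (1:ℝ≥0∞))).indicator (hAmeas r))]
    exact Finset.sum_congr rfl (fun r _ => (lintegral_indicator_one (hAmeas r)).symm)
  -- pointwise cycle bound
  have hpoint : ∀ ω, ∑ r ∈ Finset.range N, (A r).indicator (fun _ => (1:ℝ≥0∞)) ω
      ≤ ((2 * ∑ k ∈ Finset.range N, x ω k : ℕ) : ℝ≥0∞) := by
    intro ω
    have hcast : ∑ r ∈ Finset.range N, (A r).indicator (fun _ => (1:ℝ≥0∞)) ω
        = ((∑ r ∈ Finset.range N, if ω ∈ A r then 1 else 0 : ℕ) : ℝ≥0∞) := by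
      rw [Nat.cast_sum]
      refine Finset.sum_congr rfl (fun r _ => ?_)
      rw [Set.indicator_apply]
      by_cases h : ω ∈ A r <;> simp [h]
    rw [hcast]
    have hcard : (∑ r ∈ Finset.range N, if ω ∈ A r then 1 else 0 : ℕ)
        = ((Finset.range N).filter (fun r => ∃ n, 1 ≤ n ∧ n ≤ N ∧
            n ≤ 2 * ∑ k ∈ Finset.range n, x ω ((r + k) % N))).card := by
      rw [Finset.card_filter]
      exact Finset.sum_congr rfl (fun r hr => by
        have := hAr r (Finset.mem_range.mp hr) ω
        by_cases hmem : ω ∈ A r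
        · rw [if_pos hmem, if_pos (this.mp hmem)]
        · rw [if_neg hmem, if_neg (fun hc => hmem (this.mpr hc))])
    rw [hcard]
    exact_mod_cast Nat.cast_le.mpr (cycle_card_le N (x ω) hN
      (fun k => by by_cases h : ε ≤ |muhat k ω - μ₀| <;> simp [hx, h]))
  -- integral of the right side
  have hrhs : ∫⁻ ω, ((2 * ∑ k ∈ Finset.range N, x ω k : ℕ) : ℝ≥0∞) ∂μ
      ≤ 2 * (N : ℝ≥0∞) * ENNReal.ofReal β := by
    have hxmeas : ∀ k, Measurable (fun ω => ((x ω k : ℕ) : ℝ≥0∞)) := by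
      intro k
      have hs : MeasurableSet {ω | ε ≤ |muhat k ω - μ₀|} :=
        (((hmeas k).sub measurable_const).abs) measurableSet_Ici
      have : (fun ω => ((x ω k : ℕ) : ℝ≥0∞))
          = fun ω => if ε ≤ |muhat k ω - μ₀| then 1 else 0 := by
        funext ω; by_cases h : ε ≤ |muhat k ω - μ₀| <;> simp [hx, h]
      rw [this]
      exact Measurable.ite hs measurable_const measurable_const
    have heq : ∀ ω, ((2 * ∑ k ∈ Finset.range N, x ω k : ℕ) : ℝ≥0∞)
        = 2 * ∑ k ∈ Finset.range N, ((x ω k : ℕ) : ℝ≥0∞) := by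
      intro ω; push_cast; ring
    calc ∫⁻ ω, ((2 * ∑ k ∈ Finset.range N, x ω k : ℕ) : ℝ≥0∞) ∂μ
        = 2 * ∑ k ∈ Finset.range N, ∫⁻ ω, ((x ω k : ℕ) : ℝ≥0∞) ∂μ := by
          simp_rw [heq]
          rw [lintegral_const_mul 2 (by
            exact Finset.measurable_sum _ (fun k _ => hxmeas k)),
            lintegral_finset_sum _ (fun k _ => hxmeas k)]
      _ ≤ 2 * ∑ k ∈ Finset.range N, ENNReal.ofReal β := by
          apply mul_le_mul_right
          apply Finset.sum_le_sum
          intro k _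
          have hs : MeasurableSet {ω | ε ≤ |muhat k ω - μ₀|} :=
            (((hmeas k).sub measurable_const).abs) measurableSet_Ici
          have : ∀ ω, ((x ω k : ℕ) : ℝ≥0∞)
              = Set.indicator {ω | ε ≤ |muhat k ω - μ₀|} (fun _ => (1:ℝ≥0∞)) ω := by
            intro ω
            rw [Set.indicator_apply]
            by_cases hc : ε ≤ |muhat k ω - μ₀| <;> simp [hx, hc]
          simp_rw [this]
          exact le_of_eq_of_le (lintegral_indicator_one hs) (hconc k)
      _ = 2 * (N : ℝ≥0∞) * ENNReal.ofReal β := by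
          rw [Finset.sum_const, Finset.card_range, nsmul_eq_mul, mul_assoc]
  -- combine
  have hmain : (N : ℝ≥0∞) * μ (A 0) ≤ (N : ℝ≥0∞) * (2 * ENNReal.ofReal β) := by
    rw [hsum, hint]
    calc ∫⁻ ω, ∑ r ∈ Finset.range N, (A r).indicator (fun _ => (1:ℝ≥0∞)) ω ∂μ
        ≤ ∫⁻ ω, ((2 * ∑ k ∈ Finset.range N, x ω k : ℕ) : ℝ≥0∞) ∂μ :=
          lintegral_mono hpoint
      _ ≤ 2 * (N : ℝ≥0∞) * ENNReal.ofReal β := hrhs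
      _ = (N : ℝ≥0∞) * (2 * ENNReal.ofReal β) := by ring
  have hfinal : μ (A 0) ≤ 2 * ENNReal.ofReal β :=
    (ENNReal.mul_le_mul_iff_right (by exact_mod_cast hN.ne') (ENNReal.natCast_ne_top N)).mp hmain
  rw [hA0]
  calc μ (A 0) ≤ 2 * ENNReal.ofReal β := hfinal
    _ = ENNReal.ofReal (2 * β) := by
        rw [ENNReal.ofReal_mul (by norm_num : (0:ℝ) ≤ 2), ENNReal.ofReal_ofNat]


end Main

end RMTU

/-- Time-uniform derandomization: for an exchangeable sequence of estimators each
within `ε` of `μ₀` except with probability `β`, the running medians `m_K` satisfy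
`P(∃ K ≥ 1, |m_K - μ₀| ≥ ε) ≤ 2β`. -/
theorem running_median_time_uniform {Ω : Type*} [MeasurableSpace Ω]
    (μ : Measure Ω) [IsProbabilityMeasure μ]
    (μ₀ : ℝ) (ε : ℝ) (hε : 0 < ε) (β : ℝ) (hβ0 : 0 ≤ β) (hβ1 : β ≤ 1)
    (muhat : ℕ → Ω → ℝ)
    (hmeas : ∀ k, Measurable (muhat k))
    (hexch : ∀ e : Equiv.Perm ℕ, (∃ n, ∀ m ≥ n, e m = m) →
      Measure.map (fun ω (k : ℕ) => muhat (e k) ω) μ =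
        Measure.map (fun ω (k : ℕ) => muhat k ω) μ)
    (hconc : ∀ k, μ {ω | ε ≤ |muhat k ω - μ₀|} ≤ ENNReal.ofReal β) :
    μ {ω | ∃ K : ℕ, 1 ≤ K ∧
        ε ≤ |medianOf (fun i : Fin K => muhat i ω) - μ₀|} ≤
      ENNReal.ofReal (2 * β) := by
  classical
  set Aset : ℕ → Set Ω := fun N => {ω | ∃ n, 1 ≤ n ∧ n ≤ N ∧
      n ≤ 2 * ∑ k ∈ Finset.range n, (if ε ≤ |muhat k ω - μ₀| then 1 else 0)} with hAset
  have hmono : Monotone Aset := by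
    intro N M hNM ω hω
    obtain ⟨n, h1, h2, h3⟩ := hω
    exact ⟨n, h1, h2.trans hNM, h3⟩
  have hsub : {ω | ∃ K : ℕ, 1 ≤ K ∧
      ε ≤ |medianOf (fun i : Fin K => muhat i ω) - μ₀|} ⊆ ⋃ N, Aset N := by
    intro ω hω
    obtain ⟨K, hK, hmed⟩ := hω
    refine Set.mem_iUnion.mpr ⟨K, ⟨K, hK, le_refl K, ?_⟩⟩
    exact RMTU.median_count K hK (fun k => muhat k ω) μ₀ ε hmed
  calc μ {ω | ∃ K : ℕ, 1 ≤ K ∧ ε ≤ |medianOf (fun i : Fin K => muhat i ω) - μ₀|}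
      ≤ μ (⋃ N, Aset N) := measure_mono hsub
    _ = ⨆ N, μ (Aset N) := Directed.measure_iUnion hmono.directed_le
    _ ≤ ENNReal.ofReal (2 * β) := by
        apply iSup_le
        intro N
        rcases Nat.eq_zero_or_pos N with hN | hN
        · have : Aset N = ∅ := by
            ext ω
            simp only [hAset, hN, Set.mem_setOf_eq, Set.mem_empty_iff_false, iff_false]
            rintro ⟨n, h1, h2, _⟩
            omega
          simp [this]
        · exact RMTU.main_bound μ μ₀ ε β muhat hε hβ0 hβ1 hmeas hexch hconc N hN
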